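/- Let n ≥ 1 and let w : ℝⁿ → ℝ be a function. Then w is a choice welfare function (monotone, translation invariant, and convex) if and only if there exists a convex function V : ℝⁿ → ℝ ∪ {+∞}, not identically +∞ on the simplex Δ_{n−1}, such that w(μ) = sup_{x ∈ Δ_{n−1}} { μᵀx − V(x) } for all μ ∈ ℝⁿ; moreover V can be taken to be the convex conjugate V(x) = sup_{y ∈ ℝⁿ} { yᵀx − w(y) }, in which case the supremum over the simplex is attained. -/

import Mathlib

open scoped BigOperators
open MeasureTheory

noncomputable section

/-- The simplex Δ_{n-1} in ℝⁿ. -/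
def choiceSimplex (n : ℕ) : Set (Fin n → ℝ) :=
  {x | (∀ i, 0 ≤ x i) ∧ ∑ i, x i = 1}

/-- A choice welfare function: monotone, translation invariant, convex. -/
def IsCWF {n : ℕ} (w : (Fin n → ℝ) → ℝ) : Prop :=
  (∀ μ₁ μ₂ : Fin n → ℝ, μ₂ ≤ μ₁ → w μ₂ ≤ w μ₁) ∧
  (∀ (μ : Fin n → ℝ) (t : ℝ), w (μ + fun _ => t) = w μ + t) ∧
  ConvexOn ℝ Set.univ w

/-- Convexity for an (ℝ ∪ {+∞})-valued function on ℝⁿ. -/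
def ConvexE {n : ℕ} (V : (Fin n → ℝ) → EReal) : Prop :=
  ∀ x y : Fin n → ℝ, ∀ a b : ℝ, 0 ≤ a → 0 ≤ b → a + b = 1 →
    V (a • x + b • y) ≤ (a : EReal) * V x + (b : EReal) * V y

/-- The convex conjugate V(x) = sup_y { yᵀx − w(y) }, valued in ℝ ∪ {+∞}. -/
def conjFn {n : ℕ} (w : (Fin n → ℝ) → ℝ) (x : Fin n → ℝ) : EReal :=
  ⨆ y : Fin n → ℝ, ((∑ i, y i * x i - w y : ℝ) : EReal)

/-! ### Auxiliary lemmas -/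

lemma cwf_ereal_cases (u : EReal) (h : u ≠ ⊥) : u = ⊤ ∨ ∃ v : ℝ, u = (v : EReal) := by
  induction u with
  | bot => exact absurd rfl h
  | coe v => exact Or.inr ⟨v, rfl⟩
  | top => exact Or.inl rfl

lemma cwf_coe_mul_le_mul {a : ℝ} (ha : 0 ≤ a) {r : ℝ} {v : EReal} (h : (r : EReal) ≤ v) :
    (a : EReal) * (r : EReal) ≤ (a : EReal) * v := by
  induction v with
  | bot => exact absurd (le_bot_iff.1 h) (EReal.coe_ne_bot r)
  | coe v =>
      rw [← EReal.coe_mul, ← EReal.coe_mul]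
      exact EReal.coe_le_coe_iff.2 (mul_le_mul_of_nonneg_left (EReal.coe_le_coe_iff.1 h) ha)
  | top =>
      rcases ha.eq_or_lt with h0 | h0
      · rw [← h0]; simp
      · rw [EReal.coe_mul_top_of_pos h0]; exact le_top

lemma cwf_iSup2_add {α : Type*} (S : Set α) (g : α → EReal) (t : ℝ) :
    (⨆ x ∈ S, (g x + (t : EReal))) = (⨆ x ∈ S, g x) + (t : EReal) := by
  apply le_antisymm
  · exact iSup₂_le fun x hx => add_le_add (le_iSup₂ (f := fun x _ => g x) x hx) le_rfl
  · rw [← EReal.le_sub_iff_add_le (Or.inl (EReal.coe_ne_bot t)) (Or.inl (EReal.coe_ne_top t))]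
    refine iSup₂_le fun x hx => ?_
    rw [EReal.le_sub_iff_add_le (Or.inl (EReal.coe_ne_bot t)) (Or.inl (EReal.coe_ne_top t))]
    exact le_iSup₂ (f := fun x _ => g x + (t : EReal)) x hx

lemma cwf_coe_add_sub (d t : ℝ) (V : EReal) (hV : V ≠ ⊥) :
    ((d + t : ℝ) : EReal) - V = (((d : ℝ) : EReal) - V) + (t : EReal) := by
  induction V with
  | bot => exact absurd rfl hV
  | coe v =>
      rw [← EReal.coe_sub, ← EReal.coe_sub, ← EReal.coe_add, EReal.coe_eq_coe_iff]; ring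
  | top => rw [EReal.sub_top, EReal.sub_top, EReal.bot_add]

lemma cwf_clm_eval {n : ℕ} (f : ((Fin n → ℝ) × ℝ) →L[ℝ] ℝ) (y : Fin n → ℝ) (t : ℝ) :
    f (y, t) = (∑ i, y i * f (Pi.single i 1, 0)) + t * f (0, 1) := by
  have hy : (y, t) = (∑ i, (y i) • ((Pi.single i 1 : Fin n → ℝ), (0 : ℝ)))
      + t • ((0 : Fin n → ℝ), (1 : ℝ)) := by
    ext j
    · simp [Prod.fst_sum, Finset.sum_apply, Pi.single_apply, mul_ite]
    · simp [Prod.snd_sum]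
  have hterm : ∀ x : Fin n, f (y x • ((Pi.single x 1 : Fin n → ℝ), (0 : ℝ)))
      = y x * f (Pi.single x 1, 0) := fun x => by rw [_root_.map_smul, smul_eq_mul]
  rw [hy, map_add, map_sum, _root_.map_smul]
  simp only [hterm, smul_eq_mul]

lemma cwf_continuous {n : ℕ} {w : (Fin n → ℝ) → ℝ} (hw : IsCWF w) : Continuous w := by
  have hle : ∀ a b : Fin n → ℝ, w a ≤ w b + ‖a - b‖ := by
    intro a b
    have hab : a ≤ b + fun _ => ‖a - b‖ := by
      intro i
      have h1 : a i - b i ≤ |(a - b) i| := le_abs_self _ |>.trans_eq (by simp)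
      have h2 : ‖(a - b) i‖ ≤ ‖a - b‖ := norm_le_pi_norm (a - b) i
      rw [Real.norm_eq_abs] at h2
      simp only [Pi.add_apply]
      linarith
    calc w a ≤ w (b + fun _ => ‖a - b‖) := hw.1 _ _ hab
      _ = w b + ‖a - b‖ := hw.2.1 b _
  have hlip : LipschitzWith 1 w := by
    refine LipschitzWith.of_dist_le_mul fun a b => ?_
    rw [Real.dist_eq, dist_eq_norm, NNReal.coe_one, one_mul, abs_sub_le_iff]
    constructor
    · have := hle a b; linarith
    · have := hle b a; rw [show b - a = -(a - b) by ring, norm_neg] at this; linarith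
  exact hlip.continuous

lemma cwf_exists_attain {n : ℕ} {w : (Fin n → ℝ) → ℝ} (hw : IsCWF w) (μ : Fin n → ℝ) :
    ∃ x ∈ choiceSimplex n, ∀ y, ∑ i, y i * x i - w y ≤ ∑ i, μ i * x i - w μ := by
  classical
  set S : Set ((Fin n → ℝ) × ℝ) := {p | w p.1 < p.2} with hS
  have hconv : Convex ℝ S := by
    have := hw.2.2.convex_strict_epigraph
    have hset : { p : (Fin n → ℝ) × ℝ | p.1 ∈ Set.univ ∧ w p.1 < p.2 } = S := by
      ext p; simp [hS]
    rwa [hset] at this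
  have hopen : IsOpen S := isOpen_lt ((cwf_continuous hw).comp continuous_fst) continuous_snd
  have hnot : (μ, w μ) ∉ S := by simp [hS]
  obtain ⟨f, hf⟩ := geometric_hahn_banach_open_point hconv hopen hnot
  set c : ℝ := f (0, 1) with hcdef
  set φ : Fin n → ℝ := fun i => f (Pi.single i 1, 0) with hφdef
  have heval : ∀ (y : Fin n → ℝ) (t : ℝ), f (y, t) = (∑ i, y i * φ i) + t * c :=
    fun y t => cwf_clm_eval f y t
  have hc : c < 0 := by
    have h1 := hf (μ, w μ + 1) (by simp [hS])
    rw [heval, heval] at h1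
    linarith
  have key : ∀ y, (∑ i, y i * φ i) + w y * c ≤ (∑ i, μ i * φ i) + w μ * c := by
    intro y
    refine le_of_forall_pos_le_add fun ε hε => ?_
    have hε' : 0 < ε / (-c) := div_pos hε (by linarith)
    have h1 := hf (y, w y + ε / (-c)) (by simp [hS]; linarith)
    rw [heval, heval] at h1
    have hmc : ε / (-c) * (-c) = ε := div_mul_cancel₀ ε (by linarith)
    nlinarith [h1]
  set x : Fin n → ℝ := fun i => φ i / (-c) with hxdef
  have hdot : ∀ y : Fin n → ℝ, ∑ i, y i * x i = (∑ i, y i * φ i) / (-c) := by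
    intro y
    rw [Finset.sum_div]
    exact Finset.sum_congr rfl fun i _ => by rw [hxdef, mul_div_assoc]
  have hcpos : (0:ℝ) < -c := by linarith
  have key2 : ∀ y, ∑ i, y i * x i - w y ≤ ∑ i, μ i * x i - w μ := by
    intro y
    rw [hdot, hdot]
    have e1 : ((∑ i, y i * φ i) - w y * (-c)) / (-c) = (∑ i, y i * φ i) / (-c) - w y := by
      rw [sub_div, mul_div_cancel_right₀ _ (ne_of_gt hcpos)]
    have e2 : ((∑ i, μ i * φ i) - w μ * (-c)) / (-c) = (∑ i, μ i * φ i) / (-c) - w μ := by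
      rw [sub_div, mul_div_cancel_right₀ _ (ne_of_gt hcpos)]
    rw [← e1, ← e2]
    exact (div_le_div_iff_of_pos_right hcpos).2 (by linarith [key y])
  refine ⟨x, ⟨?_, ?_⟩, key2⟩
  · intro i
    have hyle : μ - (Pi.single i 1 : Fin n → ℝ) ≤ μ := by
      intro j
      simp only [Pi.sub_apply]
      have : (0:ℝ) ≤ (Pi.single i 1 : Fin n → ℝ) j := by
        rcases eq_or_ne j i with h | h <;> simp [Pi.single_apply, h]
      linarith
    have hwle : w (μ - (Pi.single i 1 : Fin n → ℝ)) ≤ w μ := hw.1 _ _ hyle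
    have hsum : ∑ j, (μ - (Pi.single i 1 : Fin n → ℝ)) j * x j = (∑ j, μ j * x j) - x i := by
      simp only [Pi.sub_apply, sub_mul]
      rw [Finset.sum_sub_distrib]
      congr 1
      rw [Finset.sum_congr rfl fun j _ => by rw [Pi.single_apply, ite_mul, one_mul, zero_mul]]
      simp
    have := key2 (μ - (Pi.single i 1 : Fin n → ℝ))
    rw [hsum] at this
    linarith
  · have h1 := key2 (μ + fun _ => (1:ℝ))
    have h2 := key2 (μ + fun _ => (-1:ℝ))
    have e : ∀ t : ℝ, ∑ j, (μ + fun _ => t : Fin n → ℝ) j * x j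
        = (∑ j, μ j * x j) + t * ∑ j, x j := by
      intro t
      rw [Finset.mul_sum, ← Finset.sum_add_distrib]
      exact Finset.sum_congr rfl fun j _ => by simp; ring
    rw [e, hw.2.1] at h1 h2
    linarith

lemma cwf_conj_ne_bot {n : ℕ} (w : (Fin n → ℝ) → ℝ) (x : Fin n → ℝ) : conjFn w x ≠ ⊥ := by
  intro h
  have h0 : ((∑ i, (0 : Fin n → ℝ) i * x i - w 0 : ℝ) : EReal) ≤ conjFn w x :=
    le_iSup (fun y => ((∑ i, y i * x i - w y : ℝ) : EReal)) 0
  rw [h, le_bot_iff] at h0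
  exact EReal.coe_ne_bot _ h0

lemma cwf_conj_le {n : ℕ} (w : (Fin n → ℝ) → ℝ) (x : Fin n → ℝ) (y : Fin n → ℝ) :
    ((∑ i, y i * x i - w y : ℝ) : EReal) ≤ conjFn w x :=
  le_iSup (fun y => ((∑ i, y i * x i - w y : ℝ) : EReal)) y

lemma cwf_conj_convex {n : ℕ} (w : (Fin n → ℝ) → ℝ) : ConvexE (conjFn w) := by
  intro x y a b ha hb hab
  refine iSup_le fun z => ?_
  have hz1 : ∑ i, z i * (a • x + b • y) i - w z
      = a * (∑ i, z i * x i - w z) + b * (∑ i, z i * y i - w z) := by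
    have hs : ∑ i, z i * (a • x + b • y) i
        = a * (∑ i, z i * x i) + b * (∑ i, z i * y i) := by
      rw [Finset.mul_sum, Finset.mul_sum, ← Finset.sum_add_distrib]
      exact Finset.sum_congr rfl fun i _ => by
        simp only [Pi.add_apply, Pi.smul_apply, smul_eq_mul]; ring
    rw [hs]
    linear_combination (w z) * hab
  calc ((∑ i, z i * (a • x + b • y) i - w z : ℝ) : EReal)
      = (a : EReal) * ((∑ i, z i * x i - w z : ℝ) : EReal)
        + (b : EReal) * ((∑ i, z i * y i - w z : ℝ) : EReal) := by
        rw [hz1, EReal.coe_add, EReal.coe_mul, EReal.coe_mul]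
    _ ≤ (a : EReal) * conjFn w x + (b : EReal) * conjFn w y :=
        add_le_add (cwf_coe_mul_le_mul ha (cwf_conj_le w x z))
          (cwf_coe_mul_le_mul hb (cwf_conj_le w y z))

lemma cwf_attain_val {n : ℕ} {w : (Fin n → ℝ) → ℝ} (hw : IsCWF w) (μ : Fin n → ℝ) :
    ∃ x ∈ choiceSimplex n, conjFn w x = ((∑ i, μ i * x i - w μ : ℝ) : EReal) := by
  obtain ⟨x, hx, hkey⟩ := cwf_exists_attain hw μ
  exact ⟨x, hx, le_antisymm (iSup_le fun y => EReal.coe_le_coe_iff.2 (hkey y))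
    (cwf_conj_le w x μ)⟩

lemma cwf_rep {n : ℕ} {w : (Fin n → ℝ) → ℝ} (hw : IsCWF w) (μ : Fin n → ℝ) :
    (w μ : EReal) = ⨆ x ∈ choiceSimplex n, ((∑ i, μ i * x i : ℝ) : EReal) - conjFn w x := by
  obtain ⟨x, hx, hval⟩ := cwf_attain_val hw μ
  apply le_antisymm
  · have heq : (w μ : EReal) = ((∑ i, μ i * x i : ℝ) : EReal) - conjFn w x := by
      rw [hval, ← EReal.coe_sub, EReal.coe_eq_coe_iff]; ring
    rw [heq]
    exact le_iSup₂ (f := fun x _ => ((∑ i, μ i * x i : ℝ) : EReal) - conjFn w x) x hx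
  · refine iSup₂_le fun z hz => ?_
    calc ((∑ i, μ i * z i : ℝ) : EReal) - conjFn w z
        ≤ ((∑ i, μ i * z i : ℝ) : EReal) - ((∑ i, μ i * z i - w μ : ℝ) : EReal) :=
          EReal.sub_le_sub le_rfl (cwf_conj_le w z μ)
      _ = (w μ : EReal) := by rw [← EReal.coe_sub, EReal.coe_eq_coe_iff]; ring

lemma cwf_of_rep {n : ℕ} {w : (Fin n → ℝ) → ℝ} (V : (Fin n → ℝ) → EReal)
    (hVbot : ∀ x, V x ≠ ⊥)
    (hrep : ∀ μ : Fin n → ℝ,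
      (w μ : EReal) = ⨆ x ∈ choiceSimplex n, ((∑ i, μ i * x i : ℝ) : EReal) - V x) :
    IsCWF w := by
  refine ⟨?_, ?_, ?_⟩
  · intro μ₁ μ₂ h
    have hE : (w μ₂ : EReal) ≤ (w μ₁ : EReal) := by
      rw [hrep, hrep]
      refine iSup₂_mono fun x hx => ?_
      refine EReal.sub_le_sub (EReal.coe_le_coe_iff.2 ?_) le_rfl
      exact Finset.sum_le_sum fun i _ => mul_le_mul_of_nonneg_right (h i) (hx.1 i)
    exact EReal.coe_le_coe_iff.1 hE
  · intro μ t
    have hE : (w (μ + fun _ => t) : EReal) = ((w μ + t : ℝ) : EReal) := by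
      rw [hrep]
      have hcong : ∀ x ∈ choiceSimplex n,
          ((∑ i, (μ + fun _ => t : Fin n → ℝ) i * x i : ℝ) : EReal) - V x
          = (((∑ i, μ i * x i : ℝ) : EReal) - V x) + (t : EReal) := by
        intro x hx
        have hs : ∑ i, (μ + fun _ => t : Fin n → ℝ) i * x i = (∑ i, μ i * x i) + t := by
          have h1 : ∀ i, (μ + fun _ => t : Fin n → ℝ) i * x i = μ i * x i + t * x i :=
            fun i => by simp only [Pi.add_apply]; ring
          rw [Finset.sum_congr rfl fun i _ => h1 i, Finset.sum_add_distrib, ← Finset.mul_sum,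
            hx.2, mul_one]
        rw [hs, cwf_coe_add_sub _ _ _ (hVbot x)]
      calc (⨆ x ∈ choiceSimplex n,
              ((∑ i, (μ + fun _ => t : Fin n → ℝ) i * x i : ℝ) : EReal) - V x)
          = ⨆ x ∈ choiceSimplex n, ((((∑ i, μ i * x i : ℝ) : EReal) - V x) + (t : EReal)) :=
            iSup_congr fun x => iSup_congr fun hx => hcong x hx
        _ = (⨆ x ∈ choiceSimplex n, (((∑ i, μ i * x i : ℝ) : EReal) - V x)) + (t : EReal) :=
            cwf_iSup2_add _ _ t
        _ = ((w μ + t : ℝ) : EReal) := by rw [← hrep, EReal.coe_add]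
    exact EReal.coe_eq_coe_iff.1 hE
  · refine ⟨convex_univ, fun μ₁ _ μ₂ _ a b ha hb hab => ?_⟩
    have hE : (w (a • μ₁ + b • μ₂) : EReal) ≤ ((a * w μ₁ + b * w μ₂ : ℝ) : EReal) := by
      rw [hrep]
      refine iSup₂_le fun x hx => ?_
      have hd1 : ((∑ i, μ₁ i * x i : ℝ) : EReal) - V x ≤ (w μ₁ : EReal) := by
        rw [hrep μ₁]
        exact le_iSup₂ (f := fun x _ => ((∑ i, μ₁ i * x i : ℝ) : EReal) - V x) x hx
      have hd2 : ((∑ i, μ₂ i * x i : ℝ) : EReal) - V x ≤ (w μ₂ : EReal) := by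
        rw [hrep μ₂]
        exact le_iSup₂ (f := fun x _ => ((∑ i, μ₂ i * x i : ℝ) : EReal) - V x) x hx
      rcases cwf_ereal_cases (V x) (hVbot x) with htop | ⟨v, hv⟩
      · rw [htop, EReal.sub_top]; exact bot_le
      · rw [hv, ← EReal.coe_sub, EReal.coe_le_coe_iff] at hd1 hd2
        rw [hv, ← EReal.coe_sub, EReal.coe_le_coe_iff]
        have hs : ∑ i, (a • μ₁ + b • μ₂ : Fin n → ℝ) i * x i
            = a * (∑ i, μ₁ i * x i) + b * (∑ i, μ₂ i * x i) := by
          rw [Finset.mul_sum, Finset.mul_sum, ← Finset.sum_add_distrib]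
          exact Finset.sum_congr rfl fun i _ => by
            simp only [Pi.add_apply, Pi.smul_apply, smul_eq_mul]; ring
        rw [hs]
        have hv' : a * v + b * v = v := by rw [← add_mul, hab, one_mul]
        nlinarith [mul_le_mul_of_nonneg_left hd1 ha, mul_le_mul_of_nonneg_left hd2 hb, hv']
    exact EReal.coe_le_coe_iff.1 hE

theorem stmt_0 (n : ℕ) (hn : 1 ≤ n) (w : (Fin n → ℝ) → ℝ) :
    (IsCWF w ↔
      ∃ V : (Fin n → ℝ) → EReal,
        ConvexE V ∧ (∀ x, V x ≠ ⊥) ∧ (∃ x ∈ choiceSimplex n, V x ≠ ⊤) ∧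
        ∀ μ : Fin n → ℝ,
          (w μ : EReal) = ⨆ x ∈ choiceSimplex n, ((∑ i, μ i * x i : ℝ) : EReal) - V x) ∧
    (IsCWF w →
      ConvexE (conjFn w) ∧ (∀ x, conjFn w x ≠ ⊥) ∧
      (∃ x ∈ choiceSimplex n, conjFn w x ≠ ⊤) ∧
      (∀ μ : Fin n → ℝ,
        (w μ : EReal) = ⨆ x ∈ choiceSimplex n, ((∑ i, μ i * x i : ℝ) : EReal) - conjFn w x) ∧
      (∀ μ : Fin n → ℝ, ∃ x ∈ choiceSimplex n,
        (w μ : EReal) = ((∑ i, μ i * x i : ℝ) : EReal) - conjFn w x)) := by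
  have hmain : IsCWF w →
      ConvexE (conjFn w) ∧ (∀ x, conjFn w x ≠ ⊥) ∧
      (∃ x ∈ choiceSimplex n, conjFn w x ≠ ⊤) ∧
      (∀ μ : Fin n → ℝ,
        (w μ : EReal) = ⨆ x ∈ choiceSimplex n, ((∑ i, μ i * x i : ℝ) : EReal) - conjFn w x) ∧
      (∀ μ : Fin n → ℝ, ∃ x ∈ choiceSimplex n,
        (w μ : EReal) = ((∑ i, μ i * x i : ℝ) : EReal) - conjFn w x) := by
    intro hw
    refine ⟨cwf_conj_convex w, cwf_conj_ne_bot w, ?_, cwf_rep hw, ?_⟩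
    · obtain ⟨x, hx, hval⟩ := cwf_attain_val hw 0
      exact ⟨x, hx, by rw [hval]; exact EReal.coe_ne_top _⟩
    · intro μ
      obtain ⟨x, hx, hval⟩ := cwf_attain_val hw μ
      refine ⟨x, hx, ?_⟩
      rw [hval, ← EReal.coe_sub, EReal.coe_eq_coe_iff]; ring
  refine ⟨⟨fun hw => ?_, fun ⟨V, _, hVbot, _, hrep⟩ => cwf_of_rep V hVbot hrep⟩, hmain⟩
  obtain ⟨h1, h2, h3, h4, _⟩ := hmain hw
  exact ⟨conjFn w, h1, h2, h3, h4⟩
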